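/- For n ≥ 1 and nonzero variables x_1,...,x_{n+1} with x̄ = 1/x: det_{1≤i,j≤n+1}(x_i^{n+1-j} + x̄_i^{n+1-j}) = (-1)^n x_{n+1}^{-n} ∏_{i=1}^n (x_i - x_{n+1})(x̄_i - x_{n+1}) · det_{1≤i,j≤n}(x_i^{n-j} + x̄_i^{n-j}). -/

import Mathlib

open Polynomial Finset Matrix

/-- Normalized Dickson polynomials: `dpoly F 0 = 1`, `dpoly F k = dickson 1 1 k` for `k ≥ 1`. -/
private noncomputable def dpoly (F : Type*) [Field F] (k : ℕ) : Polynomial F :=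
  if k = 0 then 1 else Polynomial.dickson 1 1 k

private lemma dickson_monic_natDegree {F : Type*} [Field F] :
    ∀ k : ℕ, (Polynomial.dickson 1 (1 : F) (k + 1)).Monic ∧
      (Polynomial.dickson 1 (1 : F) (k + 1)).natDegree = k + 1
  | 0 => by simp [Polynomial.dickson_one, Polynomial.monic_X]
  | 1 => by
      have h2 : Polynomial.dickson 1 (1 : F) 2 = X ^ 2 - C (2 : F) := by
        rw [Polynomial.dickson_two]
        push_cast
        ring_nf
        simp
        exact (map_ofNat Polynomial.C 2).symm
      rw [h2]
      exact ⟨Polynomial.monic_X_pow_sub_C _ (by norm_num), Polynomial.natDegree_X_pow_sub_C⟩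
  | (k + 2) => by
      obtain ⟨hm1, hd1⟩ := dickson_monic_natDegree (F := F) k
      obtain ⟨hm2, hd2⟩ := dickson_monic_natDegree (F := F) (k + 1)
      rw [Polynomial.dickson_add_two]
      have hmon : (X * Polynomial.dickson 1 (1 : F) (k + 2)).Monic := Polynomial.monic_X.mul hm2
      have hdeg : (X * Polynomial.dickson 1 (1 : F) (k + 2)).natDegree = k + 3 := by
        rw [Polynomial.natDegree_mul Polynomial.X_ne_zero hm2.ne_zero,
          Polynomial.natDegree_X, hd2]
        omega
      have hlt : (C (1 : F) * Polynomial.dickson 1 (1 : F) (k + 1)).degree <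
          (X * Polynomial.dickson 1 (1 : F) (k + 2)).degree := by
        simp only [_root_.map_one, one_mul]
        rw [Polynomial.degree_eq_natDegree hmon.ne_zero, hdeg,
          Polynomial.degree_eq_natDegree hm1.ne_zero, hd1]
        exact_mod_cast Nat.cast_lt (α := WithBot ℕ) |>.mpr (by omega)
      refine ⟨hmon.sub_of_left hlt, ?_⟩
      rw [Polynomial.natDegree_sub_eq_left_of_natDegree_lt, hdeg]
      rw [hdeg]
      calc (C (1 : F) * Polynomial.dickson 1 (1 : F) (k + 1)).natDegree
          ≤ _ := Polynomial.natDegree_mul_le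
        _ < k + 3 := by simp [hd1]

private lemma dpoly_monic {F : Type*} [Field F] (k : ℕ) : (dpoly F k).Monic := by
  cases k with
  | zero => simpa [dpoly] using Polynomial.monic_one
  | succ k => simpa [dpoly] using (dickson_monic_natDegree (F := F) k).1

private lemma dpoly_natDegree {F : Type*} [Field F] (k : ℕ) : (dpoly F k).natDegree = k := by
  cases k with
  | zero => simp [dpoly]
  | succ k => simpa [dpoly] using (dickson_monic_natDegree (F := F) k).2

private lemma dpoly_eval {F : Type*} [Field F] {a : F} (ha : a ≠ 0) (k : ℕ) (hk : k ≠ 0) :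
    (dpoly F k).eval (a + a⁻¹) = a ^ k + a⁻¹ ^ k := by
  rw [dpoly, if_neg hk]
  exact Polynomial.dickson_one_one_eval_add_inv a a⁻¹ (mul_inv_cancel₀ ha) k

private lemma prod_rev_rev {M : Type*} [CommMonoid M] {m : ℕ} (f : Fin m → Fin m → M) :
    (∏ i : Fin m, ∏ j ∈ Finset.Ioi i, f (Fin.rev j) (Fin.rev i)) =
      ∏ i : Fin m, ∏ j ∈ Finset.Iio i, f j i := by
  rw [Finset.prod_sigma', Finset.prod_sigma']
  refine Finset.prod_nbij' (fun p => ⟨Fin.rev p.1, Fin.rev p.2⟩)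
    (fun p => ⟨Fin.rev p.1, Fin.rev p.2⟩) ?_ ?_ ?_ ?_ ?_ <;>
    simp [Fin.rev_lt_rev, Sigma.ext_iff]

/-- Key evaluation: the full determinant in terms of `t i = x i + (x i)⁻¹`. -/
private lemma key_det {F : Type*} [Field F] (m : ℕ) (hm : 1 ≤ m) (x : Fin m → F)
    (hx : ∀ i, x i ≠ 0) :
    Matrix.det (Matrix.of fun i j : Fin m =>
        x i ^ (m - 1 - (j : ℕ)) + (x i)⁻¹ ^ (m - 1 - (j : ℕ))) =
      2 * ∏ i : Fin m, ∏ j ∈ Finset.Iio i,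
        ((x j + (x j)⁻¹) - (x i + (x i)⁻¹)) := by
  set t : Fin m → F := fun i => x i + (x i)⁻¹ with ht
  have hDet : Matrix.det (Matrix.of fun i j : Fin m =>
      (dpoly F (m - 1 - (j : ℕ))).eval (t i)) =
      ∏ i : Fin m, ∏ j ∈ Finset.Iio i, (t j - t i) := by
    have hE : (Matrix.of fun i j : Fin m => (dpoly F (m - 1 - (j : ℕ))).eval (t i)) =
        (Matrix.of fun i j : Fin m => (dpoly F (j : ℕ)).eval (t (Fin.rev i))).submatrix
          Fin.revPerm Fin.revPerm := by
      ext i j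
      simp only [Matrix.submatrix_apply, Matrix.of_apply, Fin.revPerm_apply, Fin.rev_rev]
      congr 2
      rw [Fin.val_rev]
      omega
    rw [hE, Matrix.det_submatrix_equiv_self]
    rw [← Matrix.det_eval_matrixOfPolynomials_eq_det_vandermonde (fun i => t (Fin.rev i))
      (fun j : Fin m => dpoly F (j : ℕ)) (fun j => dpoly_natDegree _) (fun j => dpoly_monic _)]
    rw [Matrix.det_vandermonde]
    exact prod_rev_rev (fun a b => t a - t b)
  have hM : (Matrix.of fun i j : Fin m =>
        x i ^ (m - 1 - (j : ℕ)) + (x i)⁻¹ ^ (m - 1 - (j : ℕ))) =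
      Matrix.of (fun i j : Fin m =>
        (if j = (⟨m - 1, by omega⟩ : Fin m) then (2 : F) else 1) *
          ((dpoly F (m - 1 - (j : ℕ))).eval (t i))) := by
    ext i j
    by_cases hj : j = (⟨m - 1, by omega⟩ : Fin m)
    · subst hj
      have h0 : m - 1 - ((⟨m - 1, by omega⟩ : Fin m) : ℕ) = 0 := by simp
      simp only [Matrix.of_apply, h0, if_pos rfl, pow_zero, dpoly, if_pos rfl,
        Polynomial.eval_one]
      norm_num
    · have hj' : m - 1 - (j : ℕ) ≠ 0 := by
        have h1 := j.isLt
        have h2 : (j : ℕ) ≠ m - 1 := fun h => hj (Fin.ext (by simpa using h))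
        omega
      simp only [Matrix.of_apply, if_neg hj, one_mul]
      rw [dpoly_eval (hx i) _ hj']
  have hmr := Matrix.det_mul_row (fun j : Fin m => if j = (⟨m - 1, by omega⟩ : Fin m) then (2 : F) else 1)
    (Matrix.of fun i j : Fin m => (dpoly F (m - 1 - (j : ℕ))).eval (t i))
  simp only [Matrix.of_apply] at hmr
  rw [hM, hmr]
  have hprod2 : (∏ j : Fin m, (if j = (⟨m - 1, by omega⟩ : Fin m) then (2 : F) else 1)) = 2 := by
    rw [Finset.prod_ite_eq' Finset.univ (⟨m - 1, by omega⟩ : Fin m) (fun _ => (2 : F))]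
    simp
  rw [hprod2]
  exact congrArg (fun d => 2 * d) hDet

/-- Krattenthaler: determinant identity for `det(x_i^{n+1-j} + x̄_i^{n+1-j})`.
Indices are 0-indexed: the `(i,j)` entry of the big matrix is `x_i^{n-j} + x̄_i^{n-j}`
(for `j = 0,…,n`), matching the 1-indexed exponent `n+1-j`. -/
theorem det_add_pow {F : Type*} [Field F] (n : ℕ) (hn : 1 ≤ n)
    (x : Fin (n + 1) → F) (hx : ∀ i, x i ≠ 0) :
    Matrix.det (Matrix.of fun i j : Fin (n + 1) =>
        x i ^ (n - (j : ℕ)) + (x i)⁻¹ ^ (n - (j : ℕ))) =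
      (-1) ^ n * ((x (Fin.last n))⁻¹) ^ n *
        (∏ i : Fin n, ((x i.castSucc - x (Fin.last n)) * ((x i.castSucc)⁻¹ - x (Fin.last n)))) *
        Matrix.det (Matrix.of fun i j : Fin n =>
          x i.castSucc ^ (n - 1 - (j : ℕ)) + (x i.castSucc)⁻¹ ^ (n - 1 - (j : ℕ))) := by
  have hbig := key_det (n + 1) (by omega) x hx
  have hsmall := key_det n hn (fun i => x i.castSucc) (fun i => hx _)
  beta_reduce at hsmall
  rw [show (Matrix.of fun i j : Fin (n + 1) =>
      x i ^ (n - (j : ℕ)) + (x i)⁻¹ ^ (n - (j : ℕ))) =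
      (Matrix.of fun i j : Fin (n + 1) =>
      x i ^ (n + 1 - 1 - (j : ℕ)) + (x i)⁻¹ ^ (n + 1 - 1 - (j : ℕ))) from rfl, hbig, hsmall]
  rw [Fin.prod_univ_castSucc (f := fun i : Fin (n + 1) =>
    ∏ j ∈ Finset.Iio i, ((x j + (x j)⁻¹) - (x i + (x i)⁻¹)))]
  have h1 : ∀ i : Fin n,
      (∏ j ∈ Finset.Iio i.castSucc, ((x j + (x j)⁻¹) - (x i.castSucc + (x i.castSucc)⁻¹))) =
      ∏ j ∈ Finset.Iio i,
        ((x j.castSucc + (x j.castSucc)⁻¹) - (x i.castSucc + (x i.castSucc)⁻¹)) := fun i => by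
    rw [Fin.Iio_castSucc, Finset.prod_map]; rfl
  rw [Finset.prod_congr rfl (fun i _ => h1 i)]
  have h2 : (∏ j ∈ Finset.Iio (Fin.last n),
      ((x j + (x j)⁻¹) - (x (Fin.last n) + (x (Fin.last n))⁻¹))) =
      ∏ j : Fin n,
        ((x j.castSucc + (x j.castSucc)⁻¹) - (x (Fin.last n) + (x (Fin.last n))⁻¹)) := by
    rw [Fin.Iio_last_eq_map, Finset.prod_map]; rfl
  rw [h2]
  have h3 : ∀ j : Fin n,
      ((x j.castSucc + (x j.castSucc)⁻¹) - (x (Fin.last n) + (x (Fin.last n))⁻¹)) =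
      (-1) * (x (Fin.last n))⁻¹ *
        ((x j.castSucc - x (Fin.last n)) * ((x j.castSucc)⁻¹ - x (Fin.last n))) := by
    intro j
    have hj := hx j.castSucc
    have hl := hx (Fin.last n)
    field_simp
    ring
  rw [Finset.prod_congr rfl (fun j _ => h3 j), Finset.prod_mul_distrib,
    Finset.prod_const, Finset.card_univ, Fintype.card_fin]
  ring
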